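/- Let A be a k-algebra, σ a k-algebra automorphism of A, δ a σ-derivation, and n ≥ 0. Let C^m(A, M) = Hom_k(A^{⊗m}, M) denote the Hochschild cochain complex of an A-A-bimodule M, with differential b(g)(a_1,…,a_{m+1}) = a_1·g(a_2,…,a_{m+1}) + Σ_{i=1}^{m} (−1)^i g(a_1,…,a_i a_{i+1},…,a_{m+1}) + (−1)^{m+1} g(a_1,…,a_m)·a_{m+1}. Take coefficients A⊗A := A ⊗_k A with the outer bimodule structure a·(c⊗c')·b = ac⊗c'b, and A⊗A^{σ⁻¹} := A ⊗_k A with structure a·(c⊗c')·b = ac⊗c'σ⁻¹(b). For f ∈ C^n(A, A⊗A) set f_1 = (σ⊗id)∘f∘(σ⁻¹)^{⊗n}, f_2 = (id⊗σ⁻¹)∘f, and f_3 = (δ⊗id)∘f∘(σ⁻¹)^{⊗n} + (id⊗δσ⁻¹)∘f − Σ_{j=1}^{n} f∘(id^{⊗(j−1)} ⊗ δσ⁻¹ ⊗ (σ⁻¹)^{⊗(n−j)}), regarded as elements of C^n(A, A⊗A^{σ⁻¹}). Then the following are equivalent: (1) f is a cocycle (resp. coboundary) in C^n(A, A⊗A);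 (2) f_1 is a cocycle (resp. coboundary) in C^n(A, A⊗A^{σ⁻¹}); (3) f_2 is a cocycle (resp. coboundary) in C^n(A, A⊗A^{σ⁻¹}). Moreover, if these equivalent conditions hold, then f_3 is also a cocycle (resp. coboundary) in C^n(A, A⊗A^{σ⁻¹}). -/
import Mathlib


open scoped TensorProduct
open CategoryTheory

noncomputable section
set_option synthInstance.maxHeartbeats 1000000
set_option maxHeartbeats 1000000
set_option maxRecDepth 10000

/-- Merging of two adjacent entries of a tuple. -/
def mergeAt {A : Type} [Mul A] {n : ℕ} (a : Fin (n + 1) → A) (i : Fin n) : Fin n → A :=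
  fun j =>
    if (j : ℕ) < (i : ℕ) then a (Fin.castSucc j)
    else if (j : ℕ) = (i : ℕ) then a (Fin.castSucc j) * a (Fin.succ j)
    else a (Fin.succ j)

section Stmt6

variable (k : Type) [CommRing k] (A : Type) [Ring A] [Algebra k A]

/-- `f : A^{⊗n} → A ⊗ A` is a Hochschild cocycle, for the bimodule structure on `A ⊗ A`
whose left action is `a · (c ⊗ c') = ac ⊗ c'` and whose right action is the given `ract`. -/
def IsCocycle (ract : A → A ⊗[k] A →ₗ[k] A ⊗[k] A) (n : ℕ)
    (f : TensorPower k n A →ₗ[k] A ⊗[k] A) : Prop :=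
  ∀ a : Fin (n + 1) → A,
    TensorProduct.map (LinearMap.mulLeft k (a 0)) LinearMap.id
        (f (PiTensorProduct.tprod k (fun j : Fin n => a j.succ)))
      + ∑ i : Fin n, ((-1 : ℤ) ^ ((i : ℕ) + 1)) •
          f (PiTensorProduct.tprod k (mergeAt a i))
      + ((-1 : ℤ) ^ (n + 1)) •
          ract (a (Fin.last n))
            (f (PiTensorProduct.tprod k (fun j : Fin n => a j.castSucc))) = 0

/-- `f : A^{⊗n} → A ⊗ A` is a Hochschild coboundary, for the bimodule structure on `A ⊗ A`
whose left action is `a · (c ⊗ c') = ac ⊗ c'` and whose right action is the given `ract`. -/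
def IsCoboundary (ract : A → A ⊗[k] A →ₗ[k] A ⊗[k] A) :
    (n : ℕ) → (TensorPower k n A →ₗ[k] A ⊗[k] A) → Prop
  | 0, f => f = 0
  | m + 1, f =>
    ∃ g : TensorPower k m A →ₗ[k] A ⊗[k] A,
      ∀ a : Fin (m + 1) → A,
        f (PiTensorProduct.tprod k a) =
          TensorProduct.map (LinearMap.mulLeft k (a 0)) LinearMap.id
              (g (PiTensorProduct.tprod k (fun j : Fin m => a j.succ)))
            + ∑ i : Fin m, ((-1 : ℤ) ^ ((i : ℕ) + 1)) •
                g (PiTensorProduct.tprod k (mergeAt a i))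
            + ((-1 : ℤ) ^ (m + 1)) •
                ract (a (Fin.last m))
                  (g (PiTensorProduct.tprod k (fun j : Fin m => a j.castSucc)))

/-- The right action `(c ⊗ c') · b = c ⊗ c'b` of the outer bimodule `A ⊗ A`. -/
def ractOuter (b : A) : A ⊗[k] A →ₗ[k] A ⊗[k] A :=
  TensorProduct.map LinearMap.id (LinearMap.mulRight k b)

/-- The right action `(c ⊗ c') · b = c ⊗ c'σ⁻¹(b)` of the twisted bimodule `A ⊗ A^{σ⁻¹}`. -/
def ractTwisted (σ : A ≃ₐ[k] A) (b : A) : A ⊗[k] A →ₗ[k] A ⊗[k] A :=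
  TensorProduct.map LinearMap.id (LinearMap.mulRight k (σ.symm b))

/-! ### Auxiliary definitions -/

section Aux

variable (σ : A ≃ₐ[k] A) (δ : A →ₗ[k] A)

/-- Left multiplication on the first tensor factor. -/
def Lm (c : A) : A ⊗[k] A →ₗ[k] A ⊗[k] A :=
  TensorProduct.map (LinearMap.mulLeft k c) LinearMap.id

/-- The Hochschild differential expression. -/
def Eexp (ract : A → A ⊗[k] A →ₗ[k] A ⊗[k] A) (n : ℕ)
    (f : TensorPower k n A →ₗ[k] A ⊗[k] A) (a : Fin (n + 1) → A) : A ⊗[k] A :=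
  Lm k A (a 0) (f (PiTensorProduct.tprod k (fun j : Fin n => a j.succ)))
    + ∑ i : Fin n, ((-1 : ℤ) ^ ((i : ℕ) + 1)) •
        f (PiTensorProduct.tprod k (mergeAt a i))
    + ((-1 : ℤ) ^ (n + 1)) •
        ract (a (Fin.last n))
          (f (PiTensorProduct.tprod k (fun j : Fin n => a j.castSucc)))

lemma isCocycle_iff (ract : A → A ⊗[k] A →ₗ[k] A ⊗[k] A) (n : ℕ)
    (f : TensorPower k n A →ₗ[k] A ⊗[k] A) :
    IsCocycle k A ract n f ↔ ∀ a, Eexp k A ract n f a = 0 := Iff.rfl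

lemma isCoboundary_succ_iff (ract : A → A ⊗[k] A →ₗ[k] A ⊗[k] A) (m : ℕ)
    (f : TensorPower k (m + 1) A →ₗ[k] A ⊗[k] A) :
    IsCoboundary k A ract (m + 1) f ↔
      ∃ g, ∀ a, f (PiTensorProduct.tprod k a) = Eexp k A ract m g a := Iff.rfl

/-- The `j`-twist of a tuple. -/
def twmap {m : ℕ} (b : Fin m → A) (j : Fin m) : Fin m → A :=
  fun i => if (i : ℕ) < (j : ℕ) then b i
    else if i = j then δ (σ.symm (b i)) else σ.symm (b i)

def Pmap (τ : A ≃ₐ[k] A) (n : ℕ) : TensorPower k n A →ₗ[k] TensorPower k n A :=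
  PiTensorProduct.map fun _ : Fin n => τ.toLinearMap

def Qmap (n : ℕ) (j : Fin n) : TensorPower k n A →ₗ[k] TensorPower k n A :=
  PiTensorProduct.map fun i : Fin n =>
    if (i : ℕ) < (j : ℕ) then (LinearMap.id : A →ₗ[k] A)
    else if i = j then δ ∘ₗ σ.symm.toLinearMap else σ.symm.toLinearMap

def T3 (n : ℕ) (f : TensorPower k n A →ₗ[k] A ⊗[k] A) :
    TensorPower k n A →ₗ[k] A ⊗[k] A :=
  (TensorProduct.map δ LinearMap.id) ∘ₗ f ∘ₗ Pmap k A σ.symm n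
    + (TensorProduct.map LinearMap.id (δ ∘ₗ σ.symm.toLinearMap)) ∘ₗ f
    - ∑ j : Fin n, f ∘ₗ Qmap k A σ δ n j

lemma Pmap_tprod (τ : A ≃ₐ[k] A) (n : ℕ) (b : Fin n → A) :
    Pmap k A τ n (PiTensorProduct.tprod k b) =
      PiTensorProduct.tprod k (fun i => τ (b i)) := by
  simp [Pmap]

lemma Qmap_tprod (n : ℕ) (j : Fin n) (b : Fin n → A) :
    Qmap k A σ δ n j (PiTensorProduct.tprod k b) =
      PiTensorProduct.tprod k (twmap k A σ δ b j) := by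
  simp only [Qmap, PiTensorProduct.map_tprod]
  congr 1
  funext i
  by_cases h1 : (i : ℕ) < (j : ℕ)
  · simp [twmap, h1]
  · by_cases h2 : i = j <;> simp [twmap, h1, h2]

lemma T3_tprod (n : ℕ) (f : TensorPower k n A →ₗ[k] A ⊗[k] A) (b : Fin n → A) :
    T3 k A σ δ n f (PiTensorProduct.tprod k b) =
      TensorProduct.map δ LinearMap.id
          (f (PiTensorProduct.tprod k (fun i => σ.symm (b i))))
        + TensorProduct.map LinearMap.id (δ ∘ₗ σ.symm.toLinearMap)
            (f (PiTensorProduct.tprod k b))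
        - ∑ j : Fin n, f (PiTensorProduct.tprod k (twmap k A σ δ b j)) := by
  simp [T3, Pmap_tprod, Qmap_tprod, LinearMap.sub_apply, LinearMap.add_apply,
    LinearMap.coe_sum, Finset.sum_apply]




/-! ### Commutation lemmas on `A ⊗ A` -/

lemma comm_lr (ψ φ : A →ₗ[k] A) (x : A ⊗[k] A) :
    TensorProduct.map LinearMap.id φ (TensorProduct.map ψ LinearMap.id x) =
      TensorProduct.map ψ LinearMap.id (TensorProduct.map LinearMap.id φ x) := by
  induction x using TensorProduct.induction_on with
  | zero => simp
  | tmul y z => simp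
  | add u v hu hv => simp [hu, hv]

lemma tauL (τ : A ≃ₐ[k] A) (c : A) (x : A ⊗[k] A) :
    TensorProduct.map τ.toLinearMap LinearMap.id (Lm k A c x) =
      Lm k A (τ c) (TensorProduct.map τ.toLinearMap LinearMap.id x) := by
  induction x using TensorProduct.induction_on with
  | zero => simp
  | tmul y z => simp [Lm, map_mul]
  | add u v hu hv => simp [hu, hv]

lemma tauR (τ : A ≃ₐ[k] A) (b : A) (x : A ⊗[k] A) :
    TensorProduct.map LinearMap.id τ.toLinearMap (ractOuter k A b x) =
      ractOuter k A (τ b) (TensorProduct.map LinearMap.id τ.toLinearMap x) := by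
  induction x using TensorProduct.induction_on with
  | zero => simp
  | tmul y z => simp [ractOuter, map_mul]
  | add u v hu hv => simp [hu, hv]

variable {σ δ} in
lemma dlL (hδ : ∀ a b : A, δ (a * b) = δ a * b + σ a * δ b) (c : A) (x : A ⊗[k] A) :
    TensorProduct.map δ LinearMap.id (Lm k A c x) =
      Lm k A (δ c) x + Lm k A (σ c) (TensorProduct.map δ LinearMap.id x) := by
  induction x using TensorProduct.induction_on with
  | zero => simp
  | tmul y z => simp [Lm, hδ, TensorProduct.add_tmul]
  | add u v hu hv =>
      simp only [map_add, hu, hv]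
      abel

variable {σ δ} in
lemma drR (hδ : ∀ a b : A, δ (a * b) = δ a * b + σ a * δ b) (b : A) (x : A ⊗[k] A) :
    TensorProduct.map LinearMap.id (δ ∘ₗ σ.symm.toLinearMap) (ractOuter k A b x) =
      ractOuter k A (σ.symm b)
          (TensorProduct.map LinearMap.id (δ ∘ₗ σ.symm.toLinearMap) x)
        + ractOuter k A (δ (σ.symm b)) x := by
  induction x using TensorProduct.induction_on with
  | zero => simp
  | tmul y z => simp [ractOuter, map_mul, hδ, TensorProduct.tmul_add]
  | add u v hu hv =>
      simp only [map_add, hu, hv]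
      abel

lemma mapCancelL (τ : A ≃ₐ[k] A) (x : A ⊗[k] A) :
    TensorProduct.map τ.symm.toLinearMap LinearMap.id
        (TensorProduct.map τ.toLinearMap LinearMap.id x) = x := by
  induction x using TensorProduct.induction_on with
  | zero => simp
  | tmul y z => simp
  | add u v hu hv => simp [hu, hv]

lemma mapCancelR (τ : A ≃ₐ[k] A) (x : A ⊗[k] A) :
    TensorProduct.map LinearMap.id τ.symm.toLinearMap
        (TensorProduct.map LinearMap.id τ.toLinearMap x) = x := by
  induction x using TensorProduct.induction_on with
  | zero => simp
  | tmul y z => simp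
  | add u v hu hv => simp [hu, hv]

lemma mapInjL (τ : A ≃ₐ[k] A) :
    Function.Injective (TensorProduct.map τ.toLinearMap (LinearMap.id : A →ₗ[k] A)) :=
  Function.LeftInverse.injective (g := TensorProduct.map τ.symm.toLinearMap LinearMap.id)
    (mapCancelL k A τ)

lemma mapInjR (τ : A ≃ₐ[k] A) :
    Function.Injective (TensorProduct.map (LinearMap.id : A →ₗ[k] A) τ.toLinearMap) :=
  Function.LeftInverse.injective (g := TensorProduct.map LinearMap.id τ.symm.toLinearMap)
    (mapCancelR k A τ)

lemma mergeAt_map (τ : A ≃ₐ[k] A) {n : ℕ} (a : Fin (n + 1) → A) (i : Fin n) :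
    mergeAt (fun p => τ (a p)) i = fun p => τ (mergeAt a i p) := by
  funext p
  unfold mergeAt
  split_ifs <;> simp [map_mul]

lemma ractTwisted_eq (b : A) : ractTwisted k A σ b = ractOuter k A (σ.symm b) := rfl

/-! ### Linearity of `Eexp` in `f` -/

lemma Eexp_add (ract : A → A ⊗[k] A →ₗ[k] A ⊗[k] A) (n : ℕ)
    (f g : TensorPower k n A →ₗ[k] A ⊗[k] A) (a : Fin (n + 1) → A) :
    Eexp k A ract n (f + g) a = Eexp k A ract n f a + Eexp k A ract n g a := by
  simp only [Eexp, LinearMap.add_apply, map_add, smul_add, Finset.sum_add_distrib]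
  abel

lemma Eexp_sub (ract : A → A ⊗[k] A →ₗ[k] A ⊗[k] A) (n : ℕ)
    (f g : TensorPower k n A →ₗ[k] A ⊗[k] A) (a : Fin (n + 1) → A) :
    Eexp k A ract n (f - g) a = Eexp k A ract n f a - Eexp k A ract n g a := by
  simp only [Eexp, LinearMap.sub_apply, map_sub, smul_sub, Finset.sum_sub_distrib]
  abel

lemma Eexp_sum (ract : A → A ⊗[k] A →ₗ[k] A ⊗[k] A) (n : ℕ)
    {ι : Type} (s : Finset ι) (F : ι → (TensorPower k n A →ₗ[k] A ⊗[k] A))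
    (a : Fin (n + 1) → A) :
    Eexp k A ract n (∑ j ∈ s, F j) a = ∑ j ∈ s, Eexp k A ract n (F j) a := by
  simp only [Eexp, LinearMap.coe_sum, Finset.sum_apply, map_sum, Finset.smul_sum,
    Finset.sum_add_distrib, Finset.sum_comm (s := s)]


lemma leftR (ψ : A →ₗ[k] A) (b : A) (x : A ⊗[k] A) :
    TensorProduct.map ψ LinearMap.id (ractOuter k A b x) =
      ractOuter k A b (TensorProduct.map ψ LinearMap.id x) :=
  (comm_lr k A ψ (LinearMap.mulRight k b) x).symm

lemma rightL (φ : A →ₗ[k] A) (c : A) (x : A ⊗[k] A) :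
    TensorProduct.map LinearMap.id φ (Lm k A c x) =
      Lm k A c (TensorProduct.map LinearMap.id φ x) :=
  comm_lr k A (LinearMap.mulLeft k c) φ x

/-! ### The conjugation identities for `f₁` and `f₂` -/

lemma E1 (n : ℕ) (f : TensorPower k n A →ₗ[k] A ⊗[k] A) (a : Fin (n + 1) → A) :
    Eexp k A (ractTwisted k A σ) n
        ((TensorProduct.map σ.toLinearMap LinearMap.id) ∘ₗ f ∘ₗ Pmap k A σ.symm n) a =
      TensorProduct.map σ.toLinearMap LinearMap.id
        (Eexp k A (ractOuter k A) n f (fun i => σ.symm (a i))) := by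
  simp only [Eexp, LinearMap.comp_apply, Pmap_tprod, map_add, map_sum, map_zsmul,
    tauL, leftR, mergeAt_map, ractTwisted_eq, AlgEquiv.apply_symm_apply,
    AlgEquiv.symm_apply_apply]

lemma E1' (n : ℕ) (g : TensorPower k n A →ₗ[k] A ⊗[k] A) (a : Fin (n + 1) → A) :
    Eexp k A (ractOuter k A) n
        ((TensorProduct.map σ.symm.toLinearMap LinearMap.id) ∘ₗ g ∘ₗ Pmap k A σ n) a =
      TensorProduct.map σ.symm.toLinearMap LinearMap.id
        (Eexp k A (ractTwisted k A σ) n g (fun i => σ (a i))) := by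
  have h := tauL k A σ.symm
  simp only [Eexp, LinearMap.comp_apply, Pmap_tprod, map_add, map_sum, map_zsmul,
    h, leftR, mergeAt_map, ractTwisted_eq, AlgEquiv.apply_symm_apply,
    AlgEquiv.symm_apply_apply]

lemma E2 (n : ℕ) (f : TensorPower k n A →ₗ[k] A ⊗[k] A) (a : Fin (n + 1) → A) :
    Eexp k A (ractTwisted k A σ) n
        ((TensorProduct.map LinearMap.id σ.symm.toLinearMap) ∘ₗ f) a =
      TensorProduct.map LinearMap.id σ.symm.toLinearMap
        (Eexp k A (ractOuter k A) n f a) := by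
  have h := tauR k A σ.symm
  simp only [Eexp, LinearMap.comp_apply, map_add, map_sum, map_zsmul, rightL, h,
    ractTwisted_eq, AlgEquiv.apply_symm_apply, AlgEquiv.symm_apply_apply]

lemma E2' (n : ℕ) (g : TensorPower k n A →ₗ[k] A ⊗[k] A) (a : Fin (n + 1) → A) :
    Eexp k A (ractOuter k A) n
        ((TensorProduct.map LinearMap.id σ.toLinearMap) ∘ₗ g) a =
      TensorProduct.map LinearMap.id σ.toLinearMap
        (Eexp k A (ractTwisted k A σ) n g a) := by
  simp only [Eexp, LinearMap.comp_apply, map_add, map_sum, map_zsmul, rightL, tauR,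
    ractTwisted_eq, AlgEquiv.apply_symm_apply, AlgEquiv.symm_apply_apply]


/-! ### The two "correction term" identities for the pieces of `f₃` -/

variable {σ δ} in
lemma EA (hδ : ∀ a b : A, δ (a * b) = δ a * b + σ a * δ b)
    (n : ℕ) (f : TensorPower k n A →ₗ[k] A ⊗[k] A) (a : Fin (n + 1) → A) :
    Eexp k A (ractTwisted k A σ) n
        ((TensorProduct.map δ LinearMap.id) ∘ₗ f ∘ₗ Pmap k A σ.symm n) a =
      TensorProduct.map δ LinearMap.id
          (Eexp k A (ractOuter k A) n f (fun i => σ.symm (a i)))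
        - Lm k A (δ (σ.symm (a 0)))
            (f (PiTensorProduct.tprod k (fun i : Fin n => σ.symm (a i.succ)))) := by
  have h := dlL k A hδ
  simp only [Eexp, LinearMap.comp_apply, Pmap_tprod, map_add, map_sum, map_zsmul,
    h, leftR, mergeAt_map, ractTwisted_eq, AlgEquiv.apply_symm_apply]
  abel

variable {σ δ} in
lemma EB (hδ : ∀ a b : A, δ (a * b) = δ a * b + σ a * δ b)
    (n : ℕ) (f : TensorPower k n A →ₗ[k] A ⊗[k] A) (a : Fin (n + 1) → A) :
    Eexp k A (ractTwisted k A σ) n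
        ((TensorProduct.map LinearMap.id (δ ∘ₗ σ.symm.toLinearMap)) ∘ₗ f) a =
      TensorProduct.map LinearMap.id (δ ∘ₗ σ.symm.toLinearMap)
          (Eexp k A (ractOuter k A) n f a)
        - ((-1 : ℤ) ^ (n + 1)) •
            ractOuter k A (δ (σ.symm (a (Fin.last n))))
              (f (PiTensorProduct.tprod k (fun j : Fin n => a j.castSucc))) := by
  have h := drR k A hδ
  simp only [Eexp, LinearMap.comp_apply, map_add, map_sum, map_zsmul, rightL, h,
    ractTwisted_eq, smul_add]
  abel


/-! ### Tuple bookkeeping lemmas -/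

lemma tw_zero_zero {n : ℕ} (a : Fin (n + 1) → A) :
    twmap k A σ δ a 0 0 = δ (σ.symm (a 0)) := by
  simp [twmap]

lemma tw_zero_succ {n : ℕ} (a : Fin (n + 1) → A) :
    (fun i : Fin n => twmap k A σ δ a 0 i.succ) = fun i => σ.symm (a i.succ) := by
  funext i
  simp [twmap, Fin.succ_ne_zero]

lemma tw_succ_zero {n : ℕ} (a : Fin (n + 1) → A) (j : Fin n) :
    twmap k A σ δ a j.succ 0 = a 0 := by
  simp [twmap]

lemma tw_succ_succ {n : ℕ} (a : Fin (n + 1) → A) (j : Fin n) :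
    (fun i : Fin n => twmap k A σ δ a j.succ i.succ) =
      twmap k A σ δ (fun i : Fin n => a i.succ) j := by
  funext i
  simp only [twmap, Fin.val_succ, Nat.add_lt_add_iff_right, Fin.succ_inj]

lemma tw_last_last {n : ℕ} (a : Fin (n + 1) → A) :
    twmap k A σ δ a (Fin.last n) (Fin.last n) = δ (σ.symm (a (Fin.last n))) := by
  simp [twmap]

lemma tw_last_cast {n : ℕ} (a : Fin (n + 1) → A) :
    (fun i : Fin n => twmap k A σ δ a (Fin.last n) i.castSucc) =
      fun i => a i.castSucc := by
  funext i
  simp [twmap, Fin.coe_castSucc, Fin.val_last, i.isLt]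

lemma tw_cast_last {n : ℕ} (a : Fin (n + 1) → A) (j : Fin n) :
    twmap k A σ δ a j.castSucc (Fin.last n) = σ.symm (a (Fin.last n)) := by
  have h1 : ¬ ((Fin.last n : ℕ) < (j.castSucc : ℕ)) := by
    simp only [Fin.val_last, Fin.coe_castSucc]
    omega
  have h2 : Fin.last n ≠ j.castSucc := by
    intro h
    have := congrArg Fin.val h
    simp only [Fin.val_last, Fin.coe_castSucc] at this
    omega
  simp [twmap, h1, h2]

lemma tw_cast_cast {n : ℕ} (a : Fin (n + 1) → A) (j : Fin n) :
    (fun i : Fin n => twmap k A σ δ a j.castSucc i.castSucc) =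
      twmap k A σ δ (fun i : Fin n => a i.castSucc) j := by
  funext i
  simp only [twmap, Fin.coe_castSucc, Fin.castSucc_inj]

lemma TL1 {n : ℕ} (a : Fin (n + 1) → A) (i j : Fin n) (h : (j : ℕ) < (i : ℕ)) :
    twmap k A σ δ (mergeAt a i) j = mergeAt (twmap k A σ δ a j.castSucc) i := by
  funext p
  simp only [twmap, mergeAt, Fin.coe_castSucc, Fin.val_succ]
  split_ifs <;>
    first
      | rfl
      | exact map_mul σ.symm _ _
      | (exfalso; simp only [Fin.ext_iff, Fin.coe_castSucc, Fin.val_succ] at *; omega)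

lemma TL2 {n : ℕ} (a : Fin (n + 1) → A) (i j : Fin n) (h : (i : ℕ) < (j : ℕ)) :
    twmap k A σ δ (mergeAt a i) j = mergeAt (twmap k A σ δ a j.succ) i := by
  funext p
  simp only [twmap, mergeAt, Fin.coe_castSucc, Fin.val_succ]
  split_ifs <;>
    first
      | rfl
      | exact map_mul σ.symm _ _
      | (exfalso; simp only [Fin.ext_iff, Fin.coe_castSucc, Fin.val_succ] at *; omega)


variable {σ δ} in
lemma TL3 (hδ : ∀ a b : A, δ (a * b) = δ a * b + σ a * δ b)
    {n : ℕ} (a : Fin (n + 1) → A) (i : Fin n) :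
    (PiTensorProduct.tprod k) (twmap k A σ δ (mergeAt a i) i) =
      PiTensorProduct.tprod k (mergeAt (twmap k A σ δ a i.castSucc) i) +
        PiTensorProduct.tprod k (mergeAt (twmap k A σ δ a i.succ) i) := by
  have c1 : ¬ ((Fin.succ i : ℕ) < (Fin.castSucc i : ℕ)) := by
    simp only [Fin.val_succ, Fin.coe_castSucc]; omega
  have c2 : Fin.succ i ≠ Fin.castSucc i := by
    simp only [ne_eq, Fin.ext_iff, Fin.val_succ, Fin.coe_castSucc]; omega
  have e1 : mergeAt (twmap k A σ δ a i.castSucc) i =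
      Function.update (twmap k A σ δ (mergeAt a i) i) i
        (δ (σ.symm (a i.castSucc)) * σ.symm (a i.succ)) := by
    funext p
    rw [Function.update_apply]
    by_cases hp : p = i
    · subst hp
      rw [if_pos rfl]
      simp [mergeAt, twmap, c1, c2]
    · rw [if_neg hp]
      simp only [twmap, mergeAt, Fin.coe_castSucc, Fin.val_succ]
      split_ifs <;>
        first
          | rfl
          | exact map_mul σ.symm _ _
          | (exfalso;
             simp only [Fin.ext_iff, Fin.coe_castSucc, Fin.val_succ] at *; omega)
  have e2 : mergeAt (twmap k A σ δ a i.succ) i =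
      Function.update (twmap k A σ δ (mergeAt a i) i) i
        (a i.castSucc * δ (σ.symm (a i.succ))) := by
    funext p
    rw [Function.update_apply]
    by_cases hp : p = i
    · subst hp
      rw [if_pos rfl]
      simp [mergeAt, twmap, c1, c2]
    · rw [if_neg hp]
      simp only [twmap, mergeAt, Fin.coe_castSucc, Fin.val_succ]
      split_ifs <;>
        first
          | rfl
          | exact map_mul σ.symm _ _
          | (exfalso;
             simp only [Fin.ext_iff, Fin.coe_castSucc, Fin.val_succ] at *; omega)
  have e3 : twmap k A σ δ (mergeAt a i) i i =
      δ (σ.symm (a i.castSucc)) * σ.symm (a i.succ)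
        + a i.castSucc * δ (σ.symm (a i.succ)) := by
    have h0 : twmap k A σ δ (mergeAt a i) i i =
        δ (σ.symm (a i.castSucc * a i.succ)) := by
      simp [twmap, mergeAt]
    rw [h0, map_mul, hδ, AlgEquiv.apply_symm_apply]
  calc (PiTensorProduct.tprod k) (twmap k A σ δ (mergeAt a i) i)
      = PiTensorProduct.tprod k
          (Function.update (twmap k A σ δ (mergeAt a i) i) i
            (δ (σ.symm (a i.castSucc)) * σ.symm (a i.succ)
              + a i.castSucc * δ (σ.symm (a i.succ)))) := by
        rw [← e3, Function.update_eq_self]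
    _ = _ := by
        rw [(PiTensorProduct.tprod k).map_update_add, ← e1, ← e2]

variable {σ δ} in
lemma keyMerge (hδ : ∀ a b : A, δ (a * b) = δ a * b + σ a * δ b)
    {n : ℕ} (f : TensorPower k n A →ₗ[k] A ⊗[k] A) (a : Fin (n + 1) → A) (i : Fin n) :
    ∑ j : Fin (n + 1), f (PiTensorProduct.tprod k (mergeAt (twmap k A σ δ a j) i)) =
      ∑ j : Fin n, f (PiTensorProduct.tprod k (twmap k A σ δ (mergeAt a i) j)) := by
  rw [Fin.sum_univ_succAbove
    (fun j => f (PiTensorProduct.tprod k (mergeAt (twmap k A σ δ a j) i))) i.castSucc]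
  have key : ∀ j : Fin n,
      f (PiTensorProduct.tprod k (twmap k A σ δ (mergeAt a i) j)) =
        f (PiTensorProduct.tprod k (mergeAt (twmap k A σ δ a (i.castSucc.succAbove j)) i)) +
          if j = i then
            f (PiTensorProduct.tprod k (mergeAt (twmap k A σ δ a i.castSucc) i)) else 0 := by
    intro j
    rcases lt_trichotomy (j : ℕ) (i : ℕ) with h | h | h
    · rw [if_neg (by intro hji; subst hji; omega), add_zero,
        Fin.succAbove_of_castSucc_lt i.castSucc j
          (by simp only [Fin.lt_def, Fin.coe_castSucc]; omega),
        TL1 k A σ δ a i j h]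
    · have hji : j = i := Fin.ext h
      subst hji
      rw [if_pos rfl,
        Fin.succAbove_of_le_castSucc j.castSucc j (le_refl _),
        TL3 k A hδ a j]
      rw [map_add]
      abel
    · rw [if_neg (by intro hji; subst hji; omega), add_zero,
        Fin.succAbove_of_le_castSucc i.castSucc j
          (by simp only [Fin.le_def, Fin.coe_castSucc]; omega),
        TL2 k A σ δ a i j h]
  rw [Finset.sum_congr rfl (fun j _ => key j), Finset.sum_add_distrib,
    Finset.sum_ite_eq' Finset.univ i
      (fun _ => f (PiTensorProduct.tprod k (mergeAt (twmap k A σ δ a i.castSucc) i))),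
    if_pos (Finset.mem_univ i)]
  abel


variable {σ δ} in
lemma EC (hδ : ∀ a b : A, δ (a * b) = δ a * b + σ a * δ b)
    (n : ℕ) (f : TensorPower k n A →ₗ[k] A ⊗[k] A) (a : Fin (n + 1) → A) :
    ∑ j : Fin (n + 1), Eexp k A (ractOuter k A) n f (twmap k A σ δ a j) =
      Lm k A (δ (σ.symm (a 0)))
          (f (PiTensorProduct.tprod k (fun i : Fin n => σ.symm (a i.succ))))
        + ((-1 : ℤ) ^ (n + 1)) •
            ractOuter k A (δ (σ.symm (a (Fin.last n))))
              (f (PiTensorProduct.tprod k (fun j : Fin n => a j.castSucc)))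
        + ∑ j : Fin n, Eexp k A (ractTwisted k A σ) n (f ∘ₗ Qmap k A σ δ n j) a := by
  have hL : (∑ j : Fin (n + 1), Lm k A (twmap k A σ δ a j 0)
        (f (PiTensorProduct.tprod k (fun p : Fin n => twmap k A σ δ a j p.succ)))) =
      Lm k A (δ (σ.symm (a 0)))
          (f (PiTensorProduct.tprod k (fun i : Fin n => σ.symm (a i.succ))))
        + ∑ j : Fin n, Lm k A (a 0)
            (f (PiTensorProduct.tprod k
              (twmap k A σ δ (fun p : Fin n => a p.succ) j))) := by
    rw [Fin.sum_univ_succ]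
    rw [tw_zero_zero, tw_zero_succ]
    congr 1
    refine Finset.sum_congr rfl fun j _ => ?_
    rw [tw_succ_zero, tw_succ_succ]
  have hR : (∑ j : Fin (n + 1), ((-1 : ℤ) ^ (n + 1)) •
        ractOuter k A (twmap k A σ δ a j (Fin.last n))
          (f (PiTensorProduct.tprod k (fun p : Fin n => twmap k A σ δ a j p.castSucc)))) =
      ((-1 : ℤ) ^ (n + 1)) •
          ractOuter k A (δ (σ.symm (a (Fin.last n))))
            (f (PiTensorProduct.tprod k (fun j : Fin n => a j.castSucc)))
        + ∑ j : Fin n, ((-1 : ℤ) ^ (n + 1)) •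
            ractOuter k A (σ.symm (a (Fin.last n)))
              (f (PiTensorProduct.tprod k
                (twmap k A σ δ (fun p : Fin n => a p.castSucc) j))) := by
    rw [Fin.sum_univ_castSucc]
    rw [tw_last_last, tw_last_cast, add_comm]
    congr 1
    refine Finset.sum_congr rfl fun j _ => ?_
    rw [tw_cast_last, tw_cast_cast]
  have hM : (∑ j : Fin (n + 1), ∑ i : Fin n, ((-1 : ℤ) ^ ((i : ℕ) + 1)) •
        f (PiTensorProduct.tprod k (mergeAt (twmap k A σ δ a j) i))) =
      ∑ j : Fin n, ∑ i : Fin n, ((-1 : ℤ) ^ ((i : ℕ) + 1)) •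
        f (PiTensorProduct.tprod k (twmap k A σ δ (mergeAt a i) j)) := by
    have step : ∀ i : Fin n,
        (∑ j : Fin (n + 1), ((-1 : ℤ) ^ ((i : ℕ) + 1)) •
          f (PiTensorProduct.tprod k (mergeAt (twmap k A σ δ a j) i))) =
        ∑ j : Fin n, ((-1 : ℤ) ^ ((i : ℕ) + 1)) •
          f (PiTensorProduct.tprod k (twmap k A σ δ (mergeAt a i) j)) := fun i => by
      rw [← Finset.smul_sum, keyMerge k A hδ f a i, Finset.smul_sum]
    rw [Finset.sum_comm, Finset.sum_congr rfl (fun i _ => step i), Finset.sum_comm]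
  simp only [Eexp, LinearMap.comp_apply, Qmap_tprod, ractTwisted_eq]
  rw [Finset.sum_add_distrib, Finset.sum_add_distrib, hL, hR, hM,
    Finset.sum_add_distrib, Finset.sum_add_distrib]
  abel


variable {σ δ} in
lemma E3 (hδ : ∀ a b : A, δ (a * b) = δ a * b + σ a * δ b)
    (n : ℕ) (f : TensorPower k n A →ₗ[k] A ⊗[k] A) (a : Fin (n + 1) → A) :
    Eexp k A (ractTwisted k A σ) n (T3 k A σ δ n f) a =
      TensorProduct.map δ LinearMap.id
          (Eexp k A (ractOuter k A) n f (fun i => σ.symm (a i)))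
        + TensorProduct.map LinearMap.id (δ ∘ₗ σ.symm.toLinearMap)
            (Eexp k A (ractOuter k A) n f a)
        - ∑ j : Fin (n + 1), Eexp k A (ractOuter k A) n f (twmap k A σ δ a j) := by
  rw [T3, Eexp_sub, Eexp_add, EA k A hδ, EB k A hδ, Eexp_sum, EC k A hδ]
  abel

lemma hf3_tuple {n : ℕ} (a : Fin n → A) (j : Fin n) :
    (fun i : Fin n => if (i : ℕ) < (j : ℕ) then a i
      else if i = j then δ (σ.symm (a j)) else σ.symm (a i)) = twmap k A σ δ a j := by
  funext i
  by_cases h1 : (i : ℕ) < (j : ℕ)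
  · simp [twmap, h1]
  · by_cases h2 : i = j
    · subst h2; simp [twmap, h1]
    · simp [twmap, h1, h2]


lemma mapCancelR' (τ : A ≃ₐ[k] A) (x : A ⊗[k] A) :
    TensorProduct.map LinearMap.id τ.toLinearMap
        (TensorProduct.map LinearMap.id τ.symm.toLinearMap x) = x := by
  simpa using mapCancelR k A τ.symm x

end Aux

/-- **Cocycles and coboundaries under the twistings `f ↦ f₁, f₂, f₃`.**
Let `σ` be an automorphism of `A`, `δ` a `σ`-derivation, and `f : A^{⊗n} → A ⊗ A` a
`k`-linear map.  With `f₁ = (σ⊗id)∘f∘(σ⁻¹)^{⊗n}`, `f₂ = (id⊗σ⁻¹)∘f` and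
`f₃ = (δ⊗id)∘f∘(σ⁻¹)^{⊗n} + (id⊗δσ⁻¹)∘f − Σ_j f∘(id^{⊗(j-1)}⊗δσ⁻¹⊗(σ⁻¹)^{⊗(n-j)})`
(the latter specified by its values on pure tensors), the following are equivalent:
`f` is a cocycle (resp. coboundary) in `C^n(A, A⊗A)`; `f₁` is a cocycle (resp. coboundary)
in `C^n(A, A⊗A^{σ⁻¹})`; `f₂` is a cocycle (resp. coboundary) in `C^n(A, A⊗A^{σ⁻¹})`.
Moreover, if these hold then `f₃` is a cocycle (resp. coboundary) in `C^n(A, A⊗A^{σ⁻¹})`. -/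
theorem cocycle_coboundary_twisting
    (σ : A ≃ₐ[k] A) (δ : A →ₗ[k] A)
    (hδ : ∀ a b : A, δ (a * b) = δ a * b + σ a * δ b)
    (n : ℕ) (f f3 : TensorPower k n A →ₗ[k] A ⊗[k] A)
    (hf3 : ∀ a : Fin n → A,
      f3 (PiTensorProduct.tprod k a) =
        TensorProduct.map δ LinearMap.id
            (f (PiTensorProduct.tprod k (fun i : Fin n => σ.symm (a i))))
          + TensorProduct.map LinearMap.id (δ.comp σ.symm.toLinearMap)
              (f (PiTensorProduct.tprod k a))
          - ∑ j : Fin n,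
              f (PiTensorProduct.tprod k (fun i : Fin n =>
                if (i : ℕ) < (j : ℕ) then a i
                else if i = j then δ (σ.symm (a j))
                else σ.symm (a i)))) :
    -- `f₁` and `f₂`
    letI f1 : TensorPower k n A →ₗ[k] A ⊗[k] A :=
      (TensorProduct.map σ.toLinearMap LinearMap.id).comp
        (f.comp (PiTensorProduct.map (fun _ : Fin n => σ.symm.toLinearMap)))
    letI f2 : TensorPower k n A →ₗ[k] A ⊗[k] A :=
      (TensorProduct.map LinearMap.id σ.symm.toLinearMap).comp f
    ((IsCocycle k A (ractOuter k A) n f ↔ IsCocycle k A (ractTwisted k A σ) n f1) ∧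
      (IsCocycle k A (ractOuter k A) n f ↔ IsCocycle k A (ractTwisted k A σ) n f2) ∧
      (IsCocycle k A (ractOuter k A) n f → IsCocycle k A (ractTwisted k A σ) n f3)) ∧
    ((IsCoboundary k A (ractOuter k A) n f ↔ IsCoboundary k A (ractTwisted k A σ) n f1) ∧
      (IsCoboundary k A (ractOuter k A) n f ↔ IsCoboundary k A (ractTwisted k A σ) n f2) ∧
      (IsCoboundary k A (ractOuter k A) n f → IsCoboundary k A (ractTwisted k A σ) n f3)) := by
  show _ ∧ _
  rw [show (PiTensorProduct.map (fun _ : Fin n => σ.symm.toLinearMap) :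
      TensorPower k n A →ₗ[k] TensorPower k n A) = Pmap k A σ.symm n from rfl]
  set f1 := (TensorProduct.map σ.toLinearMap LinearMap.id) ∘ₗ f ∘ₗ Pmap k A σ.symm n
    with hf1
  set f2 := (TensorProduct.map LinearMap.id σ.symm.toLinearMap) ∘ₗ f with hf2
  have ha : ∀ a : Fin (n + 1) → A, (fun i => σ.symm (σ (a i))) = a := fun a => by
    funext i; simp
  have ha' : ∀ {m : ℕ} (b : Fin m → A), (fun i => σ.symm (σ (b i))) = b := fun b => by
    funext i; simp
  have hT : f3 = T3 k A σ δ n f := by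
    apply PiTensorProduct.ext
    apply MultilinearMap.ext
    intro b
    simp only [LinearMap.compMultilinearMap_apply]
    rw [hf3 b, T3_tprod]
    congr 1
    refine Finset.sum_congr rfl fun j _ => ?_
    rw [hf3_tuple k A σ δ b j]
  constructor
  · -- cocycle statements
    refine ⟨⟨?_, ?_⟩, ⟨?_, ?_⟩, ?_⟩
    · -- f cocycle → f1 cocycle
      intro h a
      rw [isCocycle_iff] at h
      show Eexp k A (ractTwisted k A σ) n f1 a = 0
      rw [hf1, E1, h]
      exact map_zero _
    · -- f1 cocycle → f cocycle
      intro h a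
      show Eexp k A (ractOuter k A) n f a = 0
      have h2 := h (fun i => σ (a i))
      change Eexp k A (ractTwisted k A σ) n f1 (fun i => σ (a i)) = 0 at h2
      rw [hf1, E1, ha a] at h2
      exact mapInjL k A σ (by rw [h2, map_zero])
    · -- f cocycle → f2 cocycle
      intro h a
      rw [isCocycle_iff] at h
      show Eexp k A (ractTwisted k A σ) n f2 a = 0
      rw [hf2, E2, h]
      exact map_zero _
    · -- f2 cocycle → f cocycle
      intro h a
      show Eexp k A (ractOuter k A) n f a = 0
      have h2 := h a
      change Eexp k A (ractTwisted k A σ) n f2 a = 0 at h2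
      rw [hf2, E2] at h2
      exact mapInjR k A σ.symm (by rw [h2, map_zero])
    · -- f cocycle → f3 cocycle
      intro h a
      rw [isCocycle_iff] at h
      show Eexp k A (ractTwisted k A σ) n f3 a = 0
      rw [hT, E3 k A hδ]
      simp [h]
  · -- coboundary statements
    obtain _ | m := n
    · -- degree 0
      have hptext : ∀ (g : TensorPower k 0 A →ₗ[k] A ⊗[k] A),
          (∀ b : Fin 0 → A, g (PiTensorProduct.tprod k b) = 0) → g = 0 := by
        intro g hg
        apply PiTensorProduct.ext
        apply MultilinearMap.ext
        intro b
        simpa using hg b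
      refine ⟨⟨?_, ?_⟩, ⟨?_, ?_⟩, ?_⟩
      · intro h
        change f = 0 at h
        show f1 = 0
        rw [hf1, h]
        simp
      · intro h
        change f1 = 0 at h
        show f = 0
        refine hptext f fun b => ?_
        have h2 : f1 (PiTensorProduct.tprod k (fun i => σ (b i))) = 0 := by rw [h]; rfl
        rw [hf1, LinearMap.comp_apply, LinearMap.comp_apply, Pmap_tprod, ha' b] at h2
        exact mapInjL k A σ (by rw [h2, map_zero])
      · intro h
        change f = 0 at h
        show f2 = 0
        rw [hf2, h]
        simp
      · intro h
        change f2 = 0 at h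
        show f = 0
        refine hptext f fun b => ?_
        have h2 : f2 (PiTensorProduct.tprod k b) = 0 := by rw [h]; rfl
        rw [hf2, LinearMap.comp_apply] at h2
        exact mapInjR k A σ.symm (by rw [h2, map_zero])
      · intro h
        change f = 0 at h
        show f3 = 0
        rw [hT, h]
        show T3 k A σ δ 0 0 = 0
        simp [T3]
    · -- degree m + 1
      refine ⟨⟨?_, ?_⟩, ⟨?_, ?_⟩, ?_⟩
      · rintro ⟨g, hg⟩
        have hg' : ∀ a, f (PiTensorProduct.tprod k a) =
            Eexp k A (ractOuter k A) m g a := hg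
        refine ⟨(TensorProduct.map σ.toLinearMap LinearMap.id) ∘ₗ g ∘ₗ Pmap k A σ.symm m,
          fun a => ?_⟩
        show f1 (PiTensorProduct.tprod k a) = Eexp k A (ractTwisted k A σ) m _ a
        rw [hf1, LinearMap.comp_apply, LinearMap.comp_apply, Pmap_tprod, hg']
        exact (E1 k A σ m g a).symm
      · rintro ⟨g', hg⟩
        have hg' : ∀ a, f1 (PiTensorProduct.tprod k a) =
            Eexp k A (ractTwisted k A σ) m g' a := hg
        refine ⟨(TensorProduct.map σ.symm.toLinearMap LinearMap.id) ∘ₗ g' ∘ₗ Pmap k A σ m,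
          fun a => ?_⟩
        show f (PiTensorProduct.tprod k a) = Eexp k A (ractOuter k A) m _ a
        rw [E1' k A σ m g' a, ← hg' (fun i => σ (a i)), hf1,
          LinearMap.comp_apply, LinearMap.comp_apply, Pmap_tprod, ha' a, mapCancelL]
      · rintro ⟨g, hg⟩
        have hg' : ∀ a, f (PiTensorProduct.tprod k a) =
            Eexp k A (ractOuter k A) m g a := hg
        refine ⟨(TensorProduct.map LinearMap.id σ.symm.toLinearMap) ∘ₗ g, fun a => ?_⟩
        show f2 (PiTensorProduct.tprod k a) = Eexp k A (ractTwisted k A σ) m _ a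
        rw [hf2, LinearMap.comp_apply, hg']
        exact (E2 k A σ m g a).symm
      · rintro ⟨g', hg⟩
        have hg' : ∀ a, f2 (PiTensorProduct.tprod k a) =
            Eexp k A (ractTwisted k A σ) m g' a := hg
        refine ⟨(TensorProduct.map LinearMap.id σ.toLinearMap) ∘ₗ g', fun a => ?_⟩
        show f (PiTensorProduct.tprod k a) = Eexp k A (ractOuter k A) m _ a
        rw [E2' k A σ m g' a, ← hg' a, hf2, LinearMap.comp_apply, mapCancelR']
      · rintro ⟨g, hg⟩
        have hg' : ∀ a, f (PiTensorProduct.tprod k a) =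
            Eexp k A (ractOuter k A) m g a := hg
        refine ⟨T3 k A σ δ m g, fun a => ?_⟩
        show f3 (PiTensorProduct.tprod k a) = Eexp k A (ractTwisted k A σ) m _ a
        rw [hT, T3_tprod]
        simp only [hg']
        exact (E3 k A hδ m g a).symm


end Stmt6
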